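/- Let u : [t₀, ∞) → [u₀, ∞) be locally integrable with t₀ > 0 and u₀ > 0, and define R(t) := exp(∫_{t₀}^t u(s)/s ds). Let h : [t₀, ∞) → ℝ^m be locally integrable with ‖h(t)‖ → 0 as t → ∞. Then (1/R(t)) ∫_{t₀}^t (R(s)/s) h(s) ds → 0 as t → ∞. -/

import Mathlib

open Filter Topology MeasureTheory

theorem stmt_5 {m : ℕ} (t₀ u₀ : ℝ) (ht₀ : 0 < t₀) (hu₀ : 0 < u₀)
    (u : ℝ → ℝ) (h : ℝ → EuclideanSpace ℝ (Fin m))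
    (hu : LocallyIntegrableOn u (Set.Ici t₀))
    (hub : ∀ t ∈ Set.Ici t₀, u₀ ≤ u t)
    (hh : LocallyIntegrableOn h (Set.Ici t₀))
    (hh0 : Tendsto (fun t => ‖h t‖) atTop (nhds 0)) :
    Tendsto
      (fun t =>
        (Real.exp (∫ s in t₀..t, u s / s))⁻¹ •
          ∫ s in t₀..t, (Real.exp (∫ σ in t₀..s, u σ / σ) / s) • h s)
      atTop (nhds 0) := by
  set g : ℝ → ℝ := fun s => u s / s with hgdef
  set F : ℝ → ℝ := fun t => ∫ s in t₀..t, g s with hFdef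
  set R : ℝ → ℝ := fun t => Real.exp (F t) with hRdef
  have hRpos : ∀ t, 0 < R t := fun t => Real.exp_pos _
  -- local integrability of g on [t₀,∞)
  have hgloc : LocallyIntegrableOn g (Set.Ici t₀) := by
    have hc : ContinuousOn (fun s : ℝ => s⁻¹) (Set.Ici t₀) := by
      apply ContinuousOn.inv₀ continuousOn_id
      intro x hx; exact ne_of_gt (lt_of_lt_of_le ht₀ hx)
    have := hu.continuousOn_mul hc isClosed_Ici.isLocallyClosed
    convert this using 1
    ext s; simp [hgdef, div_eq_mul_inv, mul_comm]
  have huIcc : ∀ a b : ℝ, t₀ ≤ a → t₀ ≤ b → Set.uIcc a b ⊆ Set.Ici t₀ :=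
    fun a b ha hb x hx => le_trans (le_min ha hb) hx.1
  -- interval integrability of g
  have hgint : ∀ a b : ℝ, t₀ ≤ a → t₀ ≤ b → IntervalIntegrable g volume a b := by
    intro a b ha hb
    rw [intervalIntegrable_iff]
    exact (hgloc.integrableOn_compact_subset (huIcc a b ha hb) isCompact_uIcc).mono_set
      Set.uIoc_subset_uIcc
  -- key lower bound on F increments
  have hFkey : ∀ s t : ℝ, t₀ ≤ s → s ≤ t →
      u₀ * (Real.log t - Real.log s) ≤ F t - F s := by
    intro s t hs hst
    have hs0 : 0 < s := lt_of_lt_of_le ht₀ hs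
    have ht0 : 0 < t := lt_of_lt_of_le hs0 hst
    have hsub : F t - F s = ∫ σ in s..t, g σ := by
      rw [hFdef]
      exact intervalIntegral.integral_interval_sub_left (hgint t₀ t le_rfl (hs.trans hst))
        (hgint t₀ s le_rfl hs)
    rw [hsub]
    have hcont : ContinuousOn (fun σ : ℝ => u₀ * σ⁻¹) (Set.uIcc s t) := by
      refine continuousOn_const.mul (ContinuousOn.inv₀ continuousOn_id ?_)
      intro x hx
      exact ne_of_gt (lt_of_lt_of_le (lt_min hs0 ht0) hx.1)
    have h1 : ∫ σ in s..t, u₀ * σ⁻¹ ≤ ∫ σ in s..t, g σ := by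
      apply intervalIntegral.integral_mono_on hst hcont.intervalIntegrable
        (hgint s t hs (hs.trans hst))
      intro x hx
      have hx0 : 0 < x := lt_of_lt_of_le hs0 hx.1
      have hux : u₀ ≤ u x := hub x (le_trans hs hx.1)
      calc u₀ * x⁻¹ ≤ u x * x⁻¹ :=
            mul_le_mul_of_nonneg_right hux (inv_nonneg.2 hx0.le)
        _ = g x := by rw [hgdef]; simp [div_eq_mul_inv]
    have h0 : (0:ℝ) ∉ Set.uIcc s t := fun hx => (lt_min hs0 ht0).not_ge hx.1
    calc u₀ * (Real.log t - Real.log s)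
        = ∫ σ in s..t, u₀ * σ⁻¹ := by
          rw [intervalIntegral.integral_const_mul, integral_inv h0,
            Real.log_div ht0.ne' hs0.ne']
      _ ≤ ∫ σ in s..t, g σ := h1
  -- R bound: R s ≤ R t * (s^u₀ / t^u₀)
  have hRbound : ∀ s t : ℝ, t₀ ≤ s → s ≤ t → R s ≤ R t * (s ^ u₀ / t ^ u₀) := by
    intro s t hs hst
    have hs0 : 0 < s := lt_of_lt_of_le ht₀ hs
    have ht0 : 0 < t := lt_of_lt_of_le hs0 hst
    have hk := hFkey s t hs hst
    have hF : F s ≤ F t - u₀ * Real.log t + u₀ * Real.log s := by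
      have := mul_sub u₀ (Real.log t) (Real.log s); linarith
    calc R s ≤ Real.exp (F t - u₀ * Real.log t + u₀ * Real.log s) := Real.exp_le_exp.2 hF
      _ = R t * (s ^ u₀ / t ^ u₀) := by
          rw [Real.exp_add, Real.exp_sub, Real.rpow_def_of_pos hs0, Real.rpow_def_of_pos ht0,
            mul_comm (Real.log s) u₀, mul_comm (Real.log t) u₀]
          rw [hRdef]
          ring
  -- R tends to infinity
  have hRtop : Tendsto R atTop atTop := by
    have hF0 : F t₀ = 0 := by simp [hFdef]
    have hlb : ∀ᶠ t in atTop, u₀ * (Real.log t - Real.log t₀) ≤ F t := by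
      filter_upwards [eventually_ge_atTop t₀] with t ht
      have := hFkey t₀ t le_rfl ht
      linarith
    have h1 : Tendsto (fun t => u₀ * (Real.log t - Real.log t₀)) atTop atTop := by
      apply Tendsto.const_mul_atTop hu₀
      exact tendsto_atTop_add_const_right _ _ Real.tendsto_log_atTop
    exact Real.tendsto_exp_atTop.comp (tendsto_atTop_mono' _ hlb h1)
  -- continuity of R/s
  have hRcont : ∀ a b : ℝ, t₀ ≤ a → t₀ ≤ b →
      ContinuousOn (fun s => R s / s) (Set.uIcc a b) := by
    intro a b ha hb
    have hFc : ContinuousOn F (Set.uIcc t₀ (max a b)) :=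
      intervalIntegral.continuousOn_primitive_interval
        (hgloc.integrableOn_compact_subset
          (huIcc t₀ (max a b) le_rfl (le_trans ha (le_max_left a b))) isCompact_uIcc)
    have hsub : Set.uIcc a b ⊆ Set.uIcc t₀ (max a b) := by
      rw [Set.uIcc_of_le (ha.trans (le_max_left a b))]
      exact fun x hx => ⟨le_trans (le_min ha hb) hx.1, hx.2⟩
    have hFc' : ContinuousOn F (Set.uIcc a b) := hFc.mono hsub
    apply ContinuousOn.div (Real.continuous_exp.comp_continuousOn hFc') continuousOn_id
    intro x hx
    exact ne_of_gt (lt_of_lt_of_le ht₀ (huIcc a b ha hb hx))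
  -- interval integrability of the main integrand
  have hmain : ∀ a b : ℝ, t₀ ≤ a → t₀ ≤ b →
      IntervalIntegrable (fun s => (R s / s) • h s) volume a b := by
    intro a b ha hb
    rw [intervalIntegrable_iff]
    refine ((hh.integrableOn_compact_subset (huIcc a b ha hb)
      isCompact_uIcc).continuousOn_smul (hRcont a b ha hb) isCompact_uIcc).mono_set
      Set.uIoc_subset_uIcc
  -- key integral estimate
  have hest : ∀ ε' : ℝ, 0 < ε' → ∀ T : ℝ, t₀ ≤ T → (∀ s, T ≤ s → ‖h s‖ ≤ ε') →
      ∀ t, T ≤ t → ‖∫ s in T..t, (R s / s) • h s‖ ≤ ε' * R t / u₀ := by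
    intro ε' hε' T hT hhs t ht
    have hT0 : 0 < T := lt_of_lt_of_le ht₀ hT
    have ht0 : 0 < t := lt_of_lt_of_le hT0 ht
    have htpos : 0 < t ^ u₀ := Real.rpow_pos_of_pos ht0 _
    have hbd : ∀ s ∈ Set.Icc T t, ‖(R s / s) • h s‖ ≤ ε' * (R t / t ^ u₀) * s ^ (u₀ - 1) := by
      intro s hs
      have hs0 : 0 < s := lt_of_lt_of_le hT0 hs.1
      have hRs : R s ≤ R t * (s ^ u₀ / t ^ u₀) := hRbound s t (hT.trans hs.1) hs.2
      have h1 : ‖(R s / s) • h s‖ = (R s / s) * ‖h s‖ := by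
        rw [norm_smul, Real.norm_eq_abs, abs_of_pos (div_pos (hRpos s) hs0)]
      rw [h1]
      have h2 : R s / s ≤ R t / t ^ u₀ * s ^ (u₀ - 1) := by
        rw [div_le_iff₀ hs0]
        calc R s ≤ R t * (s ^ u₀ / t ^ u₀) := hRs
          _ = R t / t ^ u₀ * s ^ (u₀ - 1) * s := by
              rw [Real.rpow_sub hs0, Real.rpow_one]
              field_simp
      calc R s / s * ‖h s‖ ≤ (R t / t ^ u₀ * s ^ (u₀ - 1)) * ε' := by
            apply mul_le_mul h2 (hhs s hs.1) (norm_nonneg _)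
            positivity
        _ = ε' * (R t / t ^ u₀) * s ^ (u₀ - 1) := by ring
    have h0TT : (0:ℝ) ∉ Set.uIcc T t := fun hx => (lt_min hT0 ht0).not_ge hx.1
    have hint2 : IntervalIntegrable (fun s => ε' * (R t / t ^ u₀) * s ^ (u₀ - 1))
        volume T t :=
      (intervalIntegral.intervalIntegrable_rpow (Or.inr h0TT)).const_mul _
    have hnorm := intervalIntegral.norm_integral_le_abs_of_norm_le
      (f := fun s => (R s / s) • h s)
      (g := fun s => ε' * (R t / t ^ u₀) * s ^ (u₀ - 1)) ?_ hint2
    · refine hnorm.trans ?_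
      rw [intervalIntegral.integral_const_mul, integral_rpow (Or.inl (by linarith))]
      have hexp : u₀ - 1 + 1 = u₀ := by ring
      rw [hexp]
      have hTt : T ^ u₀ ≤ t ^ u₀ := Real.rpow_le_rpow hT0.le ht hu₀.le
      have hTnn : (0:ℝ) ≤ T ^ u₀ := Real.rpow_nonneg hT0.le _
      have habs : |ε' * (R t / t ^ u₀) * ((t ^ u₀ - T ^ u₀) / u₀)|
          = ε' * (R t / t ^ u₀) * ((t ^ u₀ - T ^ u₀) / u₀) := by
        apply abs_of_nonneg
        have : (0:ℝ) ≤ t ^ u₀ - T ^ u₀ := by linarith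
        positivity
      rw [habs]
      calc ε' * (R t / t ^ u₀) * ((t ^ u₀ - T ^ u₀) / u₀)
          ≤ ε' * (R t / t ^ u₀) * (t ^ u₀ / u₀) := by
            have hmono : (t ^ u₀ - T ^ u₀) / u₀ ≤ t ^ u₀ / u₀ := by gcongr; linarith
            exact mul_le_mul_of_nonneg_left hmono (by positivity)
        _ = ε' * R t / u₀ := by field_simp
    · filter_upwards [MeasureTheory.ae_restrict_mem measurableSet_uIoc] with s hs
      rw [Set.uIoc_of_le ht] at hs
      exact hbd s ⟨hs.1.le, hs.2⟩
  -- final assembly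
  show Tendsto (fun t => (R t)⁻¹ • ∫ s in t₀..t, (R s / s) • h s) atTop (𝓝 0)
  rw [NormedAddCommGroup.tendsto_nhds_zero]
  intro ε hε
  set ε' : ℝ := ε * u₀ / 3 with hε'def
  have hε' : 0 < ε' := by positivity
  obtain ⟨T₁, hT₁⟩ := (eventually_atTop).1 (hh0.eventually_le_const hε')
  set T : ℝ := max T₁ t₀ with hTdef
  have hTt₀ : t₀ ≤ T := le_max_right _ _
  have hhsT : ∀ s, T ≤ s → ‖h s‖ ≤ ε' := fun s hs => hT₁ s (le_trans (le_max_left _ _) hs)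
  set I₁ : EuclideanSpace ℝ (Fin m) := ∫ s in t₀..T, (R s / s) • h s with hI₁def
  have hsmall : ∀ᶠ t in atTop, ‖I₁‖ * (R t)⁻¹ < ε / 3 := by
    have : Tendsto (fun t => ‖I₁‖ * (R t)⁻¹) atTop (𝓝 (‖I₁‖ * 0)) :=
      tendsto_const_nhds.mul hRtop.inv_tendsto_atTop
    rw [mul_zero] at this
    exact this.eventually_lt_const (by positivity)
  filter_upwards [eventually_ge_atTop T, hsmall] with t ht hsm
  have hsplit : (∫ s in t₀..t, (R s / s) • h s) = I₁ + ∫ s in T..t, (R s / s) • h s := by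
    rw [hI₁def]
    exact (intervalIntegral.integral_add_adjacent_intervals
      (hmain t₀ T le_rfl hTt₀) (hmain T t hTt₀ (hTt₀.trans ht))).symm
  rw [hsplit]
  have hRt := hRpos t
  have h2 := hest ε' hε' T hTt₀ hhsT t ht
  calc ‖(R t)⁻¹ • (I₁ + ∫ s in T..t, (R s / s) • h s)‖
      = (R t)⁻¹ * ‖I₁ + ∫ s in T..t, (R s / s) • h s‖ := by
        rw [norm_smul, Real.norm_eq_abs, abs_of_pos (inv_pos.2 hRt)]
    _ ≤ (R t)⁻¹ * (‖I₁‖ + ‖∫ s in T..t, (R s / s) • h s‖) := by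
        gcongr
        exact norm_add_le _ _
    _ ≤ (R t)⁻¹ * (‖I₁‖ + ε' * R t / u₀) := by
        gcongr
    _ = ‖I₁‖ * (R t)⁻¹ + ε' / u₀ := by field_simp
    _ = ‖I₁‖ * (R t)⁻¹ + ε / 3 := by
        have he : ε' / u₀ = ε / 3 := by rw [hε'def]; field_simp
        rw [he]
    _ < ε / 3 + ε / 3 := by linarith
    _ < ε := by linarith
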